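/- Let H be a finite-dimensional Hopf algebra over ℂ, let J be a twist for H, and set Q = m∘(S⊗Id)(J), which is invertible with Q⁻¹ = m∘(Id⊗S)(J⁻¹). Suppose S^{2n} = Id for a positive integer n, and set g := S^{2n−1}(Q⁻¹)·S^{2n−2}(Q)·⋯·S³(Q⁻¹)·S²(Q)·S(Q⁻¹)·Q (the alternating product of the elements S^{2k+1}(Q⁻¹)S^{2k}(Q) for k = n−1 down to 0). Then ε(g) = 1 and Δ(g) = J·(g⊗g)·J⁻¹; that is, g is a grouplike element of the twisted Hopf algebra H^J. -/

import Mathlib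

open TensorProduct

noncomputable section
suppress_compilation
namespace TwistAux

section Conv

variable {C A : Type} [AddCommMonoid C] [Module ℂ C] [Coalgebra ℂ C]
  [Ring A] [Algebra ℂ A]

/-- Convolution product on `Hom(C, A)`. -/
def conv (f g : C →ₗ[ℂ] A) : C →ₗ[ℂ] A :=
  LinearMap.mul' ℂ A ∘ₗ TensorProduct.map f g ∘ₗ Coalgebra.comul

lemma conv_apply (f g : C →ₗ[ℂ] A) (c : C) :
    conv f g c = LinearMap.mul' ℂ A (TensorProduct.map f g (Coalgebra.comul c)) := rfl

/-- Convolution unit. -/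
def convOne : C →ₗ[ℂ] A := Algebra.linearMap ℂ A ∘ₗ Coalgebra.counit

lemma mul'_assoc_apply (w : (A ⊗[ℂ] A) ⊗[ℂ] A) :
    LinearMap.mul' ℂ A (TensorProduct.map (LinearMap.mul' ℂ A) LinearMap.id w) =
      LinearMap.mul' ℂ A (TensorProduct.map LinearMap.id (LinearMap.mul' ℂ A)
        (TensorProduct.assoc ℂ A A A w)) := by
  have : LinearMap.mul' ℂ A ∘ₗ TensorProduct.map (LinearMap.mul' ℂ A) LinearMap.id =
      (LinearMap.mul' ℂ A ∘ₗ TensorProduct.map LinearMap.id (LinearMap.mul' ℂ A)) ∘ₗ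
        (TensorProduct.assoc ℂ A A A).toLinearMap := by
    apply TensorProduct.ext_threefold
    intro x y z
    simp [mul_assoc]
  exact DFunLike.congr_fun this w

lemma map_conv_left (f g h : C →ₗ[ℂ] A) (X : C ⊗[ℂ] C) :
    TensorProduct.map (conv f g) h X =
      TensorProduct.map (LinearMap.mul' ℂ A) LinearMap.id
        (TensorProduct.map (TensorProduct.map f g) h
          (TensorProduct.map Coalgebra.comul LinearMap.id X)) := by
  induction X using TensorProduct.induction_on with
  | zero => simp
  | tmul x y => simp [conv_apply]
  | add u v hu hv => simp [hu, hv]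

lemma map_conv_right (f g h : C →ₗ[ℂ] A) (X : C ⊗[ℂ] C) :
    TensorProduct.map f (conv g h) X =
      TensorProduct.map LinearMap.id (LinearMap.mul' ℂ A)
        (TensorProduct.map f (TensorProduct.map g h)
          (TensorProduct.map LinearMap.id Coalgebra.comul X)) := by
  induction X using TensorProduct.induction_on with
  | zero => simp
  | tmul x y => simp [conv_apply]
  | add u v hu hv => simp [hu, hv]

lemma conv_assoc (f g h : C →ₗ[ℂ] A) : conv (conv f g) h = conv f (conv g h) := by
  apply LinearMap.ext; intro c
  rw [conv_apply, conv_apply, map_conv_left, map_conv_right]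
  have coas : TensorProduct.map Coalgebra.comul LinearMap.id
        (Coalgebra.comul (R := ℂ) c) =
      (TensorProduct.assoc ℂ C C C).symm
        (TensorProduct.map LinearMap.id Coalgebra.comul (Coalgebra.comul (R := ℂ) c)) := by
    have h1 : (TensorProduct.map Coalgebra.comul LinearMap.id :
        C ⊗[ℂ] C →ₗ[ℂ] (C ⊗[ℂ] C) ⊗[ℂ] C) = (Coalgebra.comul (R := ℂ)).rTensor C := rfl
    have h2 : (TensorProduct.map LinearMap.id Coalgebra.comul :
        C ⊗[ℂ] C →ₗ[ℂ] C ⊗[ℂ] (C ⊗[ℂ] C)) = (Coalgebra.comul (R := ℂ)).lTensor C := rfl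
    rw [h1, h2, Coalgebra.coassoc_symm_apply]
  rw [coas]
  have nat : TensorProduct.map (TensorProduct.map f g) h
        ((TensorProduct.assoc ℂ C C C).symm
          (TensorProduct.map LinearMap.id Coalgebra.comul (Coalgebra.comul (R := ℂ) c))) =
      (TensorProduct.assoc ℂ A A A).symm
        (TensorProduct.map f (TensorProduct.map g h)
          (TensorProduct.map LinearMap.id Coalgebra.comul (Coalgebra.comul (R := ℂ) c))) := by
    exact DFunLike.congr_fun (TensorProduct.map_map_comp_assoc_symm_eq f g h) _
  rw [nat, mul'_assoc_apply, LinearEquiv.apply_symm_apply]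

lemma conv_one_left (f : C →ₗ[ℂ] A) : conv convOne f = f := by
  apply LinearMap.ext; intro c
  rw [conv_apply]
  have e1 : (TensorProduct.map (convOne : C →ₗ[ℂ] A) f) =
      TensorProduct.map (Algebra.linearMap ℂ A) f ∘ₗ
        TensorProduct.map Coalgebra.counit LinearMap.id := by
    rw [← TensorProduct.map_comp]; rfl
  rw [e1]
  have e2 : (TensorProduct.map (Coalgebra.counit (R := ℂ)) (LinearMap.id (M := C)))
      (Coalgebra.comul c) = (1 : ℂ) ⊗ₜ[ℂ] c := Coalgebra.rTensor_counit_comul c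
  simp only [LinearMap.comp_apply, e2]
  simp

lemma conv_one_right (f : C →ₗ[ℂ] A) : conv f convOne = f := by
  apply LinearMap.ext; intro c
  rw [conv_apply]
  have e1 : (TensorProduct.map f (convOne : C →ₗ[ℂ] A)) =
      TensorProduct.map f (Algebra.linearMap ℂ A) ∘ₗ
        TensorProduct.map LinearMap.id Coalgebra.counit := by
    rw [← TensorProduct.map_comp]; rfl
  rw [e1]
  have e2 : (TensorProduct.map (LinearMap.id (M := C)) (Coalgebra.counit (R := ℂ)))
      (Coalgebra.comul c) = c ⊗ₜ[ℂ] (1 : ℂ) := Coalgebra.lTensor_counit_comul c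
  simp only [LinearMap.comp_apply, e2]
  simp [Algebra.commutes]

lemma conv_unique {f g h : C →ₗ[ℂ] A} (h1 : conv g f = convOne)
    (h2 : conv f h = convOne) : g = h := by
  have : conv g (conv f h) = conv (conv g f) h := (conv_assoc g f h).symm
  rw [h1, h2, conv_one_right, conv_one_left] at this
  exact this

end Conv

section Hopf
variable {H : Type} [Ring H] [HopfAlgebra ℂ H]

local notation "S" => HopfAlgebra.antipode (R := ℂ) (A := H)
local notation "Δ" => Coalgebra.comul (R := ℂ) (A := H)
local notation "ε" => Coalgebra.counit (R := ℂ) (A := H)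
local notation "μ" => LinearMap.mul' ℂ H

open Coalgebra Bialgebra HopfAlgebra

lemma conv_repr {A : Type} [Ring A] [Algebra ℂ A] (f g : H →ₗ[ℂ] A) {x : H}
    {ι : Type*} (r : Coalgebra.Repr ℂ x ι) :
    conv f g x = ∑ i ∈ r.index, f (r.left i) * g (r.right i) := by
  rw [conv_apply, ← r.eq, map_sum, map_sum]
  simp

/-- Repr of a product from Reprs of the factors. -/
def mulRepr {x y : H} {ι κ : Type*} (r : Coalgebra.Repr ℂ x ι) (s : Coalgebra.Repr ℂ y κ) :
    Coalgebra.Repr ℂ (x * y) (ι × κ) where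
  index := r.index ×ˢ s.index
  left := fun p => r.left p.1 * s.left p.2
  right := fun p => r.right p.1 * s.right p.2
  eq := by
    rw [Finset.sum_product]
    rw [Bialgebra.comul_mul, ← r.eq, ← s.eq, Finset.sum_mul_sum]
    try simp [Algebra.TensorProduct.tmul_mul_tmul]

lemma antipode_one_H : S (1 : H) = 1 := by
  have := HopfAlgebra.mul_antipode_rTensor_comul_apply (R := ℂ) (A := H) (a := 1)
  rw [Bialgebra.comul_one, Bialgebra.counit_one, Algebra.TensorProduct.one_def] at this
  simpa using this

lemma sum_counit_smul {x : H} {ι : Type*} (r : Coalgebra.Repr ℂ x ι) :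
    ∑ i ∈ r.index, Coalgebra.counit (R := ℂ) (r.left i) • r.right i = x := by
  have := Coalgebra.sum_counit_tmul_eq (R := ℂ) r
  have h2 := congrArg (TensorProduct.lid ℂ H) this
  rw [map_sum] at h2
  simp only [TensorProduct.lid_tmul, one_smul] at h2
  exact h2

lemma sum_smul_counit {x : H} {ι : Type*} (r : Coalgebra.Repr ℂ x ι) :
    ∑ i ∈ r.index, Coalgebra.counit (R := ℂ) (r.right i) • r.left i = x := by
  have := Coalgebra.sum_tmul_counit_eq (R := ℂ) r
  have h2 := congrArg (TensorProduct.rid ℂ H) this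
  rw [map_sum] at h2
  simp only [TensorProduct.rid_tmul, one_smul] at h2
  exact h2

lemma counit_antipode (x : H) : ε (S x) = ε x := by
  have key := HopfAlgebra.sum_antipode_mul_eq_algebraMap_counit (R := ℂ) (ℛ ℂ x)
  have h1 := congrArg (Coalgebra.counit (R := ℂ)) key
  rw [map_sum, Bialgebra.counit_algebraMap] at h1
  simp only [Bialgebra.counit_mul] at h1
  calc ε (S x) = ε (S (∑ i ∈ (ℛ ℂ x).index,
        Coalgebra.counit (R := ℂ) ((ℛ ℂ x).right i) • (ℛ ℂ x).left i)) := by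
        rw [sum_smul_counit]
    _ = ∑ i ∈ (ℛ ℂ x).index, Coalgebra.counit (R := ℂ) ((ℛ ℂ x).right i) *
          ε (S ((ℛ ℂ x).left i)) := by rw [map_sum, map_sum]; simp [smul_eq_mul]
    _ = ∑ i ∈ (ℛ ℂ x).index, ε (S ((ℛ ℂ x).left i)) *
          Coalgebra.counit (R := ℂ) ((ℛ ℂ x).right i) := by
        simp [mul_comm]
    _ = ε x := h1


/-- comul on H ⊗ H in terms of Reprs. -/
lemma comul_tmul_repr {x y : H} {ι κ : Type*} (r : Coalgebra.Repr ℂ x ι) (s : Coalgebra.Repr ℂ y κ) :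
    Coalgebra.comul (R := ℂ) (x ⊗ₜ[ℂ] y) =
      ∑ i ∈ r.index, ∑ j ∈ s.index,
        (r.left i ⊗ₜ[ℂ] s.left j) ⊗ₜ[ℂ] (r.right i ⊗ₜ[ℂ] s.right j) := by
  rw [TensorProduct.comul_tmul]
  rw [← r.eq, ← s.eq, TensorProduct.sum_tmul]
  rw [map_sum]
  refine Finset.sum_congr rfl fun i _ => ?_
  rw [TensorProduct.tmul_sum, map_sum]
  refine Finset.sum_congr rfl fun j _ => ?_
  simp

lemma conv_tmul_repr {A : Type} [Ring A] [Algebra ℂ A]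
    (f g : H ⊗[ℂ] H →ₗ[ℂ] A) {x y : H}
    {ι κ : Type*} (r : Coalgebra.Repr ℂ x ι) (s : Coalgebra.Repr ℂ y κ) :
    conv f g (x ⊗ₜ[ℂ] y) = ∑ i ∈ r.index, ∑ j ∈ s.index,
      f (r.left i ⊗ₜ[ℂ] s.left j) * g (r.right i ⊗ₜ[ℂ] s.right j) := by
  rw [conv_apply, comul_tmul_repr r s, map_sum, map_sum]
  simp [Finset.mul_sum]

lemma counit_tmul (x y : H) :
    Coalgebra.counit (R := ℂ) (x ⊗ₜ[ℂ] y) = ε x * ε y := by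
  rw [TensorProduct.counit_tmul, smul_eq_mul, mul_comm]

/-- x ⊗ y ↦ ε y • x -/
def m₁ : H ⊗[ℂ] H →ₗ[ℂ] H := LinearMap.mul' ℂ H ∘ₗ
  TensorProduct.map LinearMap.id (Algebra.linearMap ℂ H ∘ₗ Coalgebra.counit)

/-- x ⊗ y ↦ ε x • y -/
def m₂ : H ⊗[ℂ] H →ₗ[ℂ] H := LinearMap.mul' ℂ H ∘ₗ
  TensorProduct.map (Algebra.linearMap ℂ H ∘ₗ Coalgebra.counit) LinearMap.id

/-- x ⊗ y ↦ ε x • S y -/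
def n₁ : H ⊗[ℂ] H →ₗ[ℂ] H := m₂ ∘ₗ TensorProduct.map LinearMap.id S

/-- x ⊗ y ↦ ε y • S x -/
def n₂ : H ⊗[ℂ] H →ₗ[ℂ] H := m₁ ∘ₗ TensorProduct.map S LinearMap.id

/-- x ⊗ y ↦ S y * S x -/
def gS : H ⊗[ℂ] H →ₗ[ℂ] H :=
  LinearMap.mul' ℂ H ∘ₗ TensorProduct.map S S ∘ₗ (TensorProduct.comm ℂ H H).toLinearMap

@[simp] lemma m₁_tmul (x y : H) : m₁ (x ⊗ₜ[ℂ] y) = ε y • x := by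
  simp only [m₁, LinearMap.comp_apply, TensorProduct.map_tmul, LinearMap.mul'_apply,
    LinearMap.id_coe, id_eq, Algebra.linearMap_apply]
  rw [← Algebra.commutes, ← Algebra.smul_def]
@[simp] lemma m₂_tmul (x y : H) : m₂ (x ⊗ₜ[ℂ] y) = ε x • y := by
  simp only [m₂, LinearMap.comp_apply, TensorProduct.map_tmul, LinearMap.mul'_apply,
    LinearMap.id_coe, id_eq, Algebra.linearMap_apply]
  rw [← Algebra.smul_def]
@[simp] lemma n₁_tmul (x y : H) : n₁ (x ⊗ₜ[ℂ] y) = ε x • S y := by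
  simp [n₁]
@[simp] lemma n₂_tmul (x y : H) : n₂ (x ⊗ₜ[ℂ] y) = ε y • S x := by
  simp [n₂]
@[simp] lemma gS_tmul (x y : H) : gS (x ⊗ₜ[ℂ] y) = S y * S x := rfl

lemma conv_m₁_m₂ : conv (C := H ⊗[ℂ] H) (A := H) m₁ m₂ = LinearMap.mul' ℂ H := by
  apply TensorProduct.ext'; intro x y
  rw [conv_tmul_repr m₁ m₂ (ℛ ℂ x) (ℛ ℂ y)]
  simp only [m₁_tmul, m₂_tmul, LinearMap.mul'_apply]
  calc ∑ i ∈ (ℛ ℂ x).index, ∑ j ∈ (ℛ ℂ y).index,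
      (ε ((ℛ ℂ y).left j) • (ℛ ℂ x).left i) * (ε ((ℛ ℂ x).right i) • (ℛ ℂ y).right j)
      = (∑ i ∈ (ℛ ℂ x).index, ε ((ℛ ℂ x).right i) • (ℛ ℂ x).left i) *
        (∑ j ∈ (ℛ ℂ y).index, ε ((ℛ ℂ y).left j) • (ℛ ℂ y).right j) := by
        rw [Finset.sum_mul_sum]
        congr 1; ext i; congr 1; ext j
        simp only [smul_mul_smul_comm]
        rw [mul_comm]
    _ = x * y := by rw [sum_smul_counit, sum_counit_smul]

lemma conv_n₁_n₂ : conv (C := H ⊗[ℂ] H) (A := H) n₁ n₂ = gS := by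
  apply TensorProduct.ext'; intro x y
  rw [conv_tmul_repr n₁ n₂ (ℛ ℂ x) (ℛ ℂ y)]
  simp only [n₁_tmul, n₂_tmul, gS_tmul]
  calc ∑ i ∈ (ℛ ℂ x).index, ∑ j ∈ (ℛ ℂ y).index,
      (ε ((ℛ ℂ x).left i) • S ((ℛ ℂ y).left j)) * (ε ((ℛ ℂ y).right j) • S ((ℛ ℂ x).right i))
      = (∑ j ∈ (ℛ ℂ y).index, ε ((ℛ ℂ y).right j) • S ((ℛ ℂ y).left j)) *
        (∑ i ∈ (ℛ ℂ x).index, ε ((ℛ ℂ x).left i) • S ((ℛ ℂ x).right i)) := by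
        rw [Finset.sum_mul_sum, Finset.sum_comm]
        congr 1; ext j; congr 1; ext i
        simp only [smul_mul_smul_comm]
        rw [mul_comm]
    _ = S y * S x := by
        simp only [← map_smul S, ← map_sum S]
        rw [sum_smul_counit, sum_counit_smul]

lemma conv_n₂_m₁ : conv (C := H ⊗[ℂ] H) (A := H) n₂ m₁ = convOne := by
  apply TensorProduct.ext'; intro x y
  rw [conv_tmul_repr n₂ m₁ (ℛ ℂ x) (ℛ ℂ y)]
  simp only [n₂_tmul, m₁_tmul]
  have : ∀ j ∈ (ℛ ℂ y).index, ∀ i ∈ (ℛ ℂ x).index, True := fun _ _ _ _ => trivial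
  calc ∑ i ∈ (ℛ ℂ x).index, ∑ j ∈ (ℛ ℂ y).index,
      (ε ((ℛ ℂ y).left j) • S ((ℛ ℂ x).left i)) * (ε ((ℛ ℂ y).right j) • (ℛ ℂ x).right i)
      = (∑ j ∈ (ℛ ℂ y).index, ε ((ℛ ℂ y).left j) * ε ((ℛ ℂ y).right j)) •
        (∑ i ∈ (ℛ ℂ x).index, S ((ℛ ℂ x).left i) * (ℛ ℂ x).right i) := by
        rw [Finset.smul_sum]
        congr 1; ext i
        rw [Finset.sum_smul]
        congr 1; ext j
        simp only [smul_mul_smul_comm, smul_smul]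
    _ = convOne (x ⊗ₜ[ℂ] y) := by
        rw [HopfAlgebra.sum_antipode_mul_eq_algebraMap_counit]
        have hy : ∑ j ∈ (ℛ ℂ y).index, ε ((ℛ ℂ y).left j) * ε ((ℛ ℂ y).right j) = ε y := by
          have := congrArg (Coalgebra.counit (R := ℂ)) (sum_counit_smul (ℛ ℂ y))
          rw [map_sum] at this
          simpa [smul_eq_mul] using this
        rw [hy]
        show _ = (Algebra.linearMap ℂ H) (Coalgebra.counit (R := ℂ) (x ⊗ₜ[ℂ] y))
        rw [counit_tmul]
        simp only [Algebra.smul_def, Algebra.linearMap_apply, map_mul]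
        exact Algebra.commutes _ _

lemma conv_n₁_m₂ : conv (C := H ⊗[ℂ] H) (A := H) n₁ m₂ = convOne := by
  apply TensorProduct.ext'; intro x y
  rw [conv_tmul_repr n₁ m₂ (ℛ ℂ x) (ℛ ℂ y)]
  simp only [n₁_tmul, m₂_tmul]
  calc ∑ i ∈ (ℛ ℂ x).index, ∑ j ∈ (ℛ ℂ y).index,
      (ε ((ℛ ℂ x).left i) • S ((ℛ ℂ y).left j)) * (ε ((ℛ ℂ x).right i) • (ℛ ℂ y).right j)
      = (∑ i ∈ (ℛ ℂ x).index, ε ((ℛ ℂ x).left i) * ε ((ℛ ℂ x).right i)) •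
        (∑ j ∈ (ℛ ℂ y).index, S ((ℛ ℂ y).left j) * (ℛ ℂ y).right j) := by
        rw [Finset.smul_sum]
        rw [Finset.sum_comm]
        congr 1; ext j
        rw [Finset.sum_smul]
        congr 1; ext i
        simp only [smul_mul_smul_comm, smul_smul]
    _ = convOne (x ⊗ₜ[ℂ] y) := by
        rw [HopfAlgebra.sum_antipode_mul_eq_algebraMap_counit]
        have hx : ∑ i ∈ (ℛ ℂ x).index, ε ((ℛ ℂ x).left i) * ε ((ℛ ℂ x).right i) = ε x := by
          have := congrArg (Coalgebra.counit (R := ℂ)) (sum_counit_smul (ℛ ℂ x))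
          rw [map_sum] at this
          simpa [smul_eq_mul] using this
        rw [hx]
        show _ = (Algebra.linearMap ℂ H) (Coalgebra.counit (R := ℂ) (x ⊗ₜ[ℂ] y))
        rw [counit_tmul]
        simp [Algebra.smul_def, map_mul]

lemma conv_mul_Smul : conv (C := H ⊗[ℂ] H) (A := H) (LinearMap.mul' ℂ H) (S ∘ₗ LinearMap.mul' ℂ H) = convOne := by
  apply TensorProduct.ext'; intro x y
  rw [conv_tmul_repr _ _ (ℛ ℂ x) (ℛ ℂ y)]
  simp only [LinearMap.mul'_apply, LinearMap.comp_apply]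
  rw [← Finset.sum_product']
  have key := HopfAlgebra.sum_mul_antipode_eq_algebraMap_counit (R := ℂ) (mulRepr (ℛ ℂ x) (ℛ ℂ y))
  simp only [mulRepr] at key
  rw [key]
  show _ = (Algebra.linearMap ℂ H) (Coalgebra.counit (R := ℂ) (x ⊗ₜ[ℂ] y))
  rw [counit_tmul]
  simp [map_mul]

lemma antipode_mul_map : S ∘ₗ LinearMap.mul' ℂ H = (gS (H := H)) := by
  have h1 : conv gS (LinearMap.mul' ℂ H) = convOne := by
    rw [← conv_n₁_n₂, ← conv_m₁_m₂, conv_assoc, ← conv_assoc n₂ m₁ m₂, conv_n₂_m₁,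
      conv_one_left, conv_n₁_m₂]
  exact (conv_unique h1 conv_mul_Smul).symm

lemma antipode_mul (x y : H) : S (x * y) = S y * S x := by
  have := DFunLike.congr_fun antipode_mul_map (x ⊗ₜ[ℂ] y)
  simpa using this

/-- φ = τ ∘ (S ⊗ S) -/
def phi : H ⊗[ℂ] H →ₗ[ℂ] H ⊗[ℂ] H :=
  (TensorProduct.comm ℂ H H).toLinearMap ∘ₗ TensorProduct.map S S

@[simp] lemma phi_tmul (x y : H) : phi (x ⊗ₜ[ℂ] y) = S y ⊗ₜ[ℂ] S x := rfl

/-- y ↦ 1 ⊗ S y -/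
def f₁ : H →ₗ[ℂ] H ⊗[ℂ] H := TensorProduct.mk ℂ H H 1 ∘ₗ S
/-- y ↦ S y ⊗ 1 -/
def f₂ : H →ₗ[ℂ] H ⊗[ℂ] H := (TensorProduct.mk ℂ H H).flip 1 ∘ₗ S
/-- y ↦ y ⊗ 1 -/
def g₁ : H →ₗ[ℂ] H ⊗[ℂ] H := (TensorProduct.mk ℂ H H).flip 1
/-- y ↦ 1 ⊗ y -/
def g₂ : H →ₗ[ℂ] H ⊗[ℂ] H := TensorProduct.mk ℂ H H 1

@[simp] lemma f₁_apply (y : H) : f₁ y = 1 ⊗ₜ[ℂ] S y := rfl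
@[simp] lemma f₂_apply (y : H) : f₂ y = S y ⊗ₜ[ℂ] 1 := rfl
@[simp] lemma g₁_apply (y : H) : g₁ y = y ⊗ₜ[ℂ] 1 := rfl
@[simp] lemma g₂_apply (y : H) : g₂ y = 1 ⊗ₜ[ℂ] y := rfl

lemma conv_g₁_g₂ : conv (C := H) (A := H ⊗[ℂ] H) g₁ g₂ = (Coalgebra.comul (R := ℂ) (A := H)) := by
  apply LinearMap.ext; intro x
  rw [conv_repr _ _ (ℛ ℂ x)]
  simp only [g₁_apply, g₂_apply, Algebra.TensorProduct.tmul_mul_tmul, one_mul, mul_one]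
  exact (ℛ ℂ x).eq

lemma conv_f₁_f₂ : conv (C := H) (A := H ⊗[ℂ] H) f₁ f₂ = phi ∘ₗ (Coalgebra.comul (R := ℂ) (A := H)) := by
  apply LinearMap.ext; intro x
  rw [conv_repr _ _ (ℛ ℂ x)]
  simp only [f₁_apply, f₂_apply, Algebra.TensorProduct.tmul_mul_tmul, one_mul, mul_one]
  rw [LinearMap.comp_apply, ← (ℛ ℂ x).eq, map_sum]
  simp

lemma conv_f₂_g₁ : conv (C := H) (A := H ⊗[ℂ] H) f₂ g₁ = convOne := by
  apply LinearMap.ext; intro x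
  rw [conv_repr _ _ (ℛ ℂ x)]
  simp only [f₂_apply, g₁_apply, Algebra.TensorProduct.tmul_mul_tmul, mul_one]
  rw [← TensorProduct.sum_tmul, HopfAlgebra.sum_antipode_mul_eq_algebraMap_counit]
  show _ = (Algebra.linearMap ℂ (H ⊗[ℂ] H)) (Coalgebra.counit (R := ℂ) x)
  rw [Algebra.linearMap_apply, Algebra.TensorProduct.algebraMap_apply]

lemma conv_f₁_g₂ : conv (C := H) (A := H ⊗[ℂ] H) f₁ g₂ = convOne := by
  apply LinearMap.ext; intro x
  rw [conv_repr _ _ (ℛ ℂ x)]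
  simp only [f₁_apply, g₂_apply, Algebra.TensorProduct.tmul_mul_tmul, mul_one, one_mul]
  rw [← TensorProduct.tmul_sum, HopfAlgebra.sum_antipode_mul_eq_algebraMap_counit]
  show _ = (Algebra.linearMap ℂ (H ⊗[ℂ] H)) (Coalgebra.counit (R := ℂ) x)
  rw [Algebra.linearMap_apply, Algebra.TensorProduct.algebraMap_apply]
  rw [Algebra.algebraMap_eq_smul_one (A := H), TensorProduct.tmul_smul,
    TensorProduct.smul_tmul']

lemma conv_comul_comulS :
    conv (C := H) (A := H ⊗[ℂ] H) (Coalgebra.comul (R := ℂ) (A := H)) (Coalgebra.comul (R := ℂ) ∘ₗ S) = convOne := by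
  apply LinearMap.ext; intro x
  rw [conv_repr _ _ (ℛ ℂ x)]
  simp only [LinearMap.comp_apply]
  have : ∀ i ∈ (ℛ ℂ x).index,
      Coalgebra.comul (R := ℂ) ((ℛ ℂ x).left i) * Coalgebra.comul (R := ℂ) (S ((ℛ ℂ x).right i))
      = Coalgebra.comul (R := ℂ) ((ℛ ℂ x).left i * S ((ℛ ℂ x).right i)) := by
    intro i _
    rw [Bialgebra.comul_mul]
  rw [Finset.sum_congr rfl this, ← map_sum, HopfAlgebra.sum_mul_antipode_eq_algebraMap_counit]
  show _ = (Algebra.linearMap ℂ (H ⊗[ℂ] H)) (Coalgebra.counit (R := ℂ) x)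
  rw [Bialgebra.comul_algebraMap]
  rfl

lemma comul_antipode_map :
    (Coalgebra.comul (R := ℂ)) ∘ₗ S = phi ∘ₗ (Coalgebra.comul (R := ℂ) (A := H)) := by
  symm
  apply conv_unique (f := Coalgebra.comul (R := ℂ) (A := H))
  · rw [← conv_f₁_f₂, ← conv_g₁_g₂, conv_assoc, ← conv_assoc f₂ g₁ g₂, conv_f₂_g₁,
      conv_one_left, conv_f₁_g₂]
  · exact conv_comul_comulS

lemma comul_antipode (x : H) :
    Coalgebra.comul (R := ℂ) (S x) = phi (Coalgebra.comul (R := ℂ) x) :=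
  DFunLike.congr_fun comul_antipode_map x

lemma phi_antimul (X Y : H ⊗[ℂ] H) : phi (X * Y) = phi Y * phi X := by
  induction X using TensorProduct.induction_on with
  | zero => simp
  | add u v hu hv => rw [add_mul, map_add, hu, hv, map_add, mul_add]
  | tmul x y =>
    induction Y using TensorProduct.induction_on with
    | zero => simp
    | add u v hu hv => rw [mul_add, map_add, hu, hv, map_add, add_mul]
    | tmul u v =>
      rw [Algebra.TensorProduct.tmul_mul_tmul, phi_tmul, phi_tmul, phi_tmul,
        Algebra.TensorProduct.tmul_mul_tmul, antipode_mul, antipode_mul]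

lemma phi_one : phi (1 : H ⊗[ℂ] H) = 1 := by
  rw [Algebra.TensorProduct.one_def, phi_tmul, antipode_one_H]

lemma phi_phi (X : H ⊗[ℂ] H) :
    phi (phi X) = TensorProduct.map (S ∘ₗ S) (S ∘ₗ S) X := by
  induction X using TensorProduct.induction_on with
  | zero => simp
  | add u v hu hv => rw [map_add, map_add, hu, hv, map_add]
  | tmul x y => simp

/-- q : x ⊗ y ↦ S x * y -/
def qmap : H ⊗[ℂ] H →ₗ[ℂ] H := LinearMap.mul' ℂ H ∘ₗ TensorProduct.map S LinearMap.id

@[simp] lemma qmap_tmul (x y : H) : qmap (x ⊗ₜ[ℂ] y) = S x * y := rfl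

lemma qmap_comul (x : H) : qmap (Coalgebra.comul (R := ℂ) x) =
    algebraMap ℂ H (Coalgebra.counit (R := ℂ) x) :=
  HopfAlgebra.mul_antipode_rTensor_comul_apply x

lemma qmap_collapse (x : H) (Y : H ⊗[ℂ] H) :
    qmap (Coalgebra.comul (R := ℂ) x * Y) = Coalgebra.counit (R := ℂ) x • qmap Y := by
  induction Y using TensorProduct.induction_on with
  | zero => simp
  | add u v hu hv => rw [mul_add, map_add, hu, hv, map_add, smul_add]
  | tmul u v =>
    rw [← (ℛ ℂ x).eq, Finset.sum_mul, map_sum]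
    have e1 : ∀ i ∈ (ℛ ℂ x).index,
        qmap (((ℛ ℂ x).left i ⊗ₜ[ℂ] (ℛ ℂ x).right i) * (u ⊗ₜ[ℂ] v)) =
          S u * (S ((ℛ ℂ x).left i) * (ℛ ℂ x).right i) * v := by
      intro i _
      rw [Algebra.TensorProduct.tmul_mul_tmul, qmap_tmul, antipode_mul]
      noncomm_ring
    rw [Finset.sum_congr rfl e1, ← Finset.sum_mul, ← Finset.mul_sum,
      HopfAlgebra.sum_antipode_mul_eq_algebraMap_counit]
    rw [qmap_tmul, mul_assoc, ← Algebra.smul_def, mul_smul_comm]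

/-- TL : x ⊗ Y ↦ (S x ⊗ 1) * Y -/
def TL : H ⊗[ℂ] (H ⊗[ℂ] H) →ₗ[ℂ] H ⊗[ℂ] H :=
  LinearMap.mul' ℂ (H ⊗[ℂ] H) ∘ₗ TensorProduct.map f₂ LinearMap.id

@[simp] lemma TL_tmul (x : H) (Y : H ⊗[ℂ] H) :
    TL (x ⊗ₜ[ℂ] Y) = ((S x ⊗ₜ[ℂ] (1 : H)) : H ⊗[ℂ] H) * Y := rfl

/-- N : x ⊗ y ↦ (S x ⊗ 1) * Δ y -/
def Nmap : H ⊗[ℂ] H →ₗ[ℂ] H ⊗[ℂ] H :=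
  TL ∘ₗ TensorProduct.map LinearMap.id (Coalgebra.comul (R := ℂ))

@[simp] lemma Nmap_tmul (x y : H) :
    Nmap (x ⊗ₜ[ℂ] y) = ((S x ⊗ₜ[ℂ] (1 : H)) : H ⊗[ℂ] H) * Coalgebra.comul (R := ℂ) y := rfl

lemma TL_assoc (T : (H ⊗[ℂ] H) ⊗[ℂ] H) :
    TL ((TensorProduct.assoc ℂ H H H) T) = TensorProduct.map qmap LinearMap.id T := by
  have : TL ∘ₗ (TensorProduct.assoc ℂ H H H).toLinearMap =
      TensorProduct.map qmap LinearMap.id := by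
    apply TensorProduct.ext_threefold
    intro x y z
    simp only [LinearMap.comp_apply, LinearEquiv.coe_coe, TensorProduct.assoc_tmul,
      TL_tmul, TensorProduct.map_tmul, qmap_tmul, LinearMap.id_coe, id_eq,
      Algebra.TensorProduct.tmul_mul_tmul, one_mul]
  exact DFunLike.congr_fun this T

lemma Nmap_comul (y : H) : Nmap (Coalgebra.comul (R := ℂ) y) = 1 ⊗ₜ[ℂ] y := by
  have coas : (TensorProduct.map LinearMap.id (Coalgebra.comul (R := ℂ)))
      (Coalgebra.comul (R := ℂ) y) = (TensorProduct.assoc ℂ H H H)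
        ((TensorProduct.map (Coalgebra.comul (R := ℂ)) LinearMap.id)
          (Coalgebra.comul (R := ℂ) y)) := (Coalgebra.coassoc_apply y).symm
  rw [Nmap, LinearMap.comp_apply, coas, TL_assoc]
  have e : (TensorProduct.map (qmap (H := H)) (LinearMap.id (M := H))) ∘ₗ
      (TensorProduct.map (Coalgebra.comul (R := ℂ)) LinearMap.id) =
      TensorProduct.map (Algebra.linearMap ℂ H) LinearMap.id ∘ₗ
        TensorProduct.map (Coalgebra.counit (R := ℂ)) LinearMap.id := by
    rw [← TensorProduct.map_comp, ← TensorProduct.map_comp]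
    congr 1
    · exact LinearMap.ext qmap_comul
  have e2 := DFunLike.congr_fun e (Coalgebra.comul (R := ℂ) y)
  simp only [LinearMap.comp_apply] at e2
  rw [e2]
  have e3 : (TensorProduct.map (Coalgebra.counit (R := ℂ)) (LinearMap.id (M := H)))
      (Coalgebra.comul (R := ℂ) y) = (1 : ℂ) ⊗ₜ[ℂ] y := Coalgebra.rTensor_counit_comul y
  rw [e3]
  simp

lemma αsymm_tmul (x y z : H) :
    (Algebra.TensorProduct.assoc ℂ ℂ ℂ H H H).symm (x ⊗ₜ[ℂ] (y ⊗ₜ[ℂ] z)) =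
      (x ⊗ₜ[ℂ] y) ⊗ₜ[ℂ] z := by
  rw [AlgEquiv.symm_apply_eq]
  rfl

/-- Λ : V ⊗ z ↦ φ(V) * Δ z -/
def Lam : (H ⊗[ℂ] H) ⊗[ℂ] H →ₗ[ℂ] H ⊗[ℂ] H :=
  LinearMap.mul' ℂ (H ⊗[ℂ] H) ∘ₗ TensorProduct.map phi (Coalgebra.comul (R := ℂ))

@[simp] lemma Lam_tmul (V : H ⊗[ℂ] H) (z : H) :
    Lam (V ⊗ₜ[ℂ] z) = phi V * Coalgebra.comul (R := ℂ) z := rfl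

lemma Lam_mapcomul (X : H ⊗[ℂ] H) :
    Lam ((TensorProduct.map (Coalgebra.comul (R := ℂ)) LinearMap.id) X) =
      Coalgebra.comul (R := ℂ) (qmap X) := by
  induction X using TensorProduct.induction_on with
  | zero => simp
  | add u v hu hv => simp only [map_add, hu, hv]
  | tmul a b =>
    rw [TensorProduct.map_tmul, LinearMap.id_coe, id_eq, Lam_tmul, ← comul_antipode,
      ← Bialgebra.comul_mul, qmap_tmul]

lemma assoc_eq_algassoc (T : (H ⊗[ℂ] H) ⊗[ℂ] H) :
    (Algebra.TensorProduct.assoc ℂ ℂ ℂ H H H) T = (TensorProduct.assoc ℂ H H H) T := by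
  have : ((Algebra.TensorProduct.assoc ℂ ℂ ℂ H H H).toLinearMap :
      (H ⊗[ℂ] H) ⊗[ℂ] H →ₗ[ℂ] H ⊗[ℂ] (H ⊗[ℂ] H)) =
      (TensorProduct.assoc ℂ H H H).toLinearMap := by
    apply TensorProduct.ext_threefold
    intro x y z
    simp [Algebra.TensorProduct.assoc_tmul]
  exact DFunLike.congr_fun this T

lemma TL_mulright (W : H ⊗[ℂ] (H ⊗[ℂ] H)) (Z : H ⊗[ℂ] H) :
    TL (W * ((1 : H) ⊗ₜ[ℂ] Z)) = TL W * Z := by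
  induction W using TensorProduct.induction_on with
  | zero => simp
  | add u v hu hv => rw [add_mul, map_add, hu, hv, map_add, add_mul]
  | tmul x Y =>
    rw [Algebra.TensorProduct.tmul_mul_tmul, mul_one, TL_tmul, TL_tmul, mul_assoc]

lemma mapQ1 (X Y : H ⊗[ℂ] H) (w : H) :
    (TensorProduct.map qmap LinearMap.id)
        ((TensorProduct.map (Coalgebra.comul (R := ℂ)) LinearMap.id X) * (Y ⊗ₜ[ℂ] w)) =
      qmap Y ⊗ₜ[ℂ] ((TensorProduct.lid ℂ H)
        ((TensorProduct.map (Coalgebra.counit (R := ℂ)) LinearMap.id) X) * w) := by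
  induction X using TensorProduct.induction_on with
  | zero => simp
  | add u v hu hv =>
    rw [map_add, add_mul, map_add, hu, hv, map_add, map_add, add_mul,
      TensorProduct.tmul_add]
  | tmul x z =>
    rw [TensorProduct.map_tmul, TensorProduct.map_tmul, LinearMap.id_coe, id_eq,
      Algebra.TensorProduct.tmul_mul_tmul, TensorProduct.map_tmul, LinearMap.id_coe, id_eq,
      qmap_collapse, TensorProduct.lid_tmul, smul_mul_assoc]
    rw [TensorProduct.smul_tmul, TensorProduct.tmul_smul]

section Twist

variable {J Jinv : H ⊗[ℂ] H}

lemma I1 (htwist : (Algebra.TensorProduct.assoc ℂ ℂ ℂ H H H)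
      ((TensorProduct.map (Coalgebra.comul (R := ℂ)) LinearMap.id) J * (J ⊗ₜ[ℂ] (1 : H)))
    = (TensorProduct.map LinearMap.id (Coalgebra.comul (R := ℂ))) J * ((1 : H) ⊗ₜ[ℂ] J))
    (hcounit₁ : (TensorProduct.lid ℂ H)
      ((TensorProduct.map (Coalgebra.counit (R := ℂ)) LinearMap.id) J) = 1) :
    Nmap J * J = qmap J ⊗ₜ[ℂ] (1 : H) := by
  have h1 : Nmap J * J = TL ((TensorProduct.map LinearMap.id (Coalgebra.comul (R := ℂ))) J
      * ((1 : H) ⊗ₜ[ℂ] J)) := by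
    rw [TL_mulright]; rfl
  rw [h1, ← htwist, assoc_eq_algassoc, TL_assoc, mapQ1, hcounit₁, one_mul]

lemma NJeq (htwist : (Algebra.TensorProduct.assoc ℂ ℂ ℂ H H H)
      ((TensorProduct.map (Coalgebra.comul (R := ℂ)) LinearMap.id) J * (J ⊗ₜ[ℂ] (1 : H)))
    = (TensorProduct.map LinearMap.id (Coalgebra.comul (R := ℂ))) J * ((1 : H) ⊗ₜ[ℂ] J))
    (hcounit₁ : (TensorProduct.lid ℂ H)
      ((TensorProduct.map (Coalgebra.counit (R := ℂ)) LinearMap.id) J) = 1)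
    (hJ₁ : J * Jinv = 1) :
    Nmap J = (qmap J ⊗ₜ[ℂ] (1 : H)) * Jinv := by
  calc Nmap J = Nmap J * (J * Jinv) := by rw [hJ₁, mul_one]
    _ = (Nmap J * J) * Jinv := by rw [mul_assoc]
    _ = (qmap J ⊗ₜ[ℂ] (1 : H)) * Jinv := by rw [I1 htwist hcounit₁]

/-- Θ : W ↦ Λ(α⁻¹(W) * (Jinv ⊗ 1)) -/
def Theta (Ji : H ⊗[ℂ] H) : H ⊗[ℂ] (H ⊗[ℂ] H) →ₗ[ℂ] H ⊗[ℂ] H :=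
  Lam ∘ₗ LinearMap.mulRight ℂ (Ji ⊗ₜ[ℂ] (1 : H)) ∘ₗ
    (Algebra.TensorProduct.assoc ℂ ℂ ℂ H H H).symm.toLinearMap

lemma Theta_tmul (Ji : H ⊗[ℂ] H) (x y z : H) :
    Theta Ji (x ⊗ₜ[ℂ] (y ⊗ₜ[ℂ] z)) =
      phi Ji * (S y ⊗ₜ[ℂ] S x) * Coalgebra.comul (R := ℂ) z := by
  rw [Theta, LinearMap.comp_apply, LinearMap.comp_apply, AlgEquiv.toLinearMap_apply,
    αsymm_tmul, LinearMap.mulRight_apply, Algebra.TensorProduct.tmul_mul_tmul, mul_one,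
    Lam_tmul, phi_antimul, phi_tmul]

lemma ThetaMain (Ji : H ⊗[ℂ] H) (X Z : H ⊗[ℂ] H) :
    Theta Ji ((TensorProduct.map LinearMap.id (Coalgebra.comul (R := ℂ)) X) *
        ((1 : H) ⊗ₜ[ℂ] Z)) =
      phi Ji * ((1 : H) ⊗ₜ[ℂ] qmap X) * Nmap Z := by
  induction X using TensorProduct.induction_on with
  | zero => simp
  | add u v hu hv =>
    rw [map_add, add_mul, map_add, hu, hv, map_add, TensorProduct.tmul_add, mul_add,
      add_mul]
  | tmul x y =>
    induction Z using TensorProduct.induction_on with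
    | zero => simp
    | add u v hu hv =>
      rw [TensorProduct.tmul_add (1 : H) u v, mul_add, map_add, hu, hv, map_add, mul_add]
    | tmul u v =>
      rw [TensorProduct.map_tmul, LinearMap.id_coe, id_eq,
        Algebra.TensorProduct.tmul_mul_tmul, mul_one]
      rw [← (ℛ ℂ y).eq, Finset.sum_mul]
      have e1 : ∀ i ∈ (ℛ ℂ y).index,
          ((ℛ ℂ y).left i ⊗ₜ[ℂ] (ℛ ℂ y).right i) * (u ⊗ₜ[ℂ] v) =
            ((ℛ ℂ y).left i * u) ⊗ₜ[ℂ] ((ℛ ℂ y).right i * v) := by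
        intro i _; rw [Algebra.TensorProduct.tmul_mul_tmul]
      rw [Finset.sum_congr rfl e1, TensorProduct.tmul_sum, map_sum]
      have e2 : ∀ i ∈ (ℛ ℂ y).index,
          Theta Ji (x ⊗ₜ[ℂ] (((ℛ ℂ y).left i * u) ⊗ₜ[ℂ] ((ℛ ℂ y).right i * v))) =
            (phi Ji * (S u ⊗ₜ[ℂ] S x)) *
              (Nmap ((ℛ ℂ y).left i ⊗ₜ[ℂ] (ℛ ℂ y).right i) * Coalgebra.comul (R := ℂ) v) := by
        intro i _
        rw [Theta_tmul, antipode_mul, Bialgebra.comul_mul, Nmap_tmul]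
        have tm : ((S u * S ((ℛ ℂ y).left i)) ⊗ₜ[ℂ] S x : H ⊗[ℂ] H) =
            (S u ⊗ₜ[ℂ] S x) * (S ((ℛ ℂ y).left i) ⊗ₜ[ℂ] (1 : H)) := by
          rw [Algebra.TensorProduct.tmul_mul_tmul, mul_one]
        rw [tm]
        simp only [mul_assoc]
      rw [Finset.sum_congr rfl e2, ← Finset.mul_sum, ← Finset.sum_mul, ← map_sum Nmap,
        (ℛ ℂ y).eq, Nmap_comul]
      rw [qmap_tmul, Nmap_tmul]
      have h1 : ((S u ⊗ₜ[ℂ] S x) : H ⊗[ℂ] H) * ((1 : H) ⊗ₜ[ℂ] y) =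
          S u ⊗ₜ[ℂ] (S x * y) := by
        rw [Algebra.TensorProduct.tmul_mul_tmul, mul_one]
      have h2 : (((1 : H) ⊗ₜ[ℂ] (S x * y)) : H ⊗[ℂ] H) * (S u ⊗ₜ[ℂ] (1 : H)) =
          S u ⊗ₜ[ℂ] (S x * y) := by
        rw [Algebra.TensorProduct.tmul_mul_tmul, one_mul, mul_one]
      calc (phi Ji * (S u ⊗ₜ[ℂ] S x)) * (((1 : H) ⊗ₜ[ℂ] y) * Coalgebra.comul (R := ℂ) v)
          = phi Ji * ((S u ⊗ₜ[ℂ] S x) * ((1 : H) ⊗ₜ[ℂ] y)) * Coalgebra.comul (R := ℂ) v := by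
            simp only [mul_assoc]
        _ = phi Ji * (S u ⊗ₜ[ℂ] (S x * y)) * Coalgebra.comul (R := ℂ) v := by rw [h1]
        _ = phi Ji * (((1 : H) ⊗ₜ[ℂ] (S x * y)) * (S u ⊗ₜ[ℂ] (1 : H))) *
              Coalgebra.comul (R := ℂ) v := by rw [h2]
        _ = phi Ji * ((1 : H) ⊗ₜ[ℂ] (S x * y)) * ((S u ⊗ₜ[ℂ] (1 : H)) *
              Coalgebra.comul (R := ℂ) v) := by simp only [mul_assoc]

lemma K1 (htwist : (Algebra.TensorProduct.assoc ℂ ℂ ℂ H H H)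
      ((TensorProduct.map (Coalgebra.comul (R := ℂ)) LinearMap.id) J * (J ⊗ₜ[ℂ] (1 : H)))
    = (TensorProduct.map LinearMap.id (Coalgebra.comul (R := ℂ))) J * ((1 : H) ⊗ₜ[ℂ] J))
    (hcounit₁ : (TensorProduct.lid ℂ H)
      ((TensorProduct.map (Coalgebra.counit (R := ℂ)) LinearMap.id) J) = 1)
    (hJ₁ : J * Jinv = 1) :
    Coalgebra.comul (R := ℂ) (qmap J) = phi Jinv * (qmap J ⊗ₜ[ℂ] qmap J) * Jinv := by
  have hVL : (TensorProduct.map (Coalgebra.comul (R := ℂ)) LinearMap.id) J =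
      (Algebra.TensorProduct.assoc ℂ ℂ ℂ H H H).symm
        ((TensorProduct.map LinearMap.id (Coalgebra.comul (R := ℂ))) J * ((1 : H) ⊗ₜ[ℂ] J))
        * (Jinv ⊗ₜ[ℂ] (1 : H)) := by
    rw [← htwist, AlgEquiv.symm_apply_apply, mul_assoc,
      Algebra.TensorProduct.tmul_mul_tmul, hJ₁, mul_one]
    rw [← Algebra.TensorProduct.one_def, mul_one]
  have step : Coalgebra.comul (R := ℂ) (qmap J) = Theta Jinv
      ((TensorProduct.map LinearMap.id (Coalgebra.comul (R := ℂ))) J * ((1 : H) ⊗ₜ[ℂ] J)) := by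
    rw [← Lam_mapcomul, hVL]
    rfl
  rw [step, ThetaMain, NJeq htwist hcounit₁ hJ₁]
  have h3 : (((1 : H) ⊗ₜ[ℂ] qmap J) : H ⊗[ℂ] H) * (qmap J ⊗ₜ[ℂ] (1 : H)) =
      qmap J ⊗ₜ[ℂ] qmap J := by
    rw [Algebra.TensorProduct.tmul_mul_tmul, one_mul, mul_one]
  calc phi Jinv * ((1 : H) ⊗ₜ[ℂ] qmap J) * ((qmap J ⊗ₜ[ℂ] (1 : H)) * Jinv)
      = phi Jinv * (((1 : H) ⊗ₜ[ℂ] qmap J) * (qmap J ⊗ₜ[ℂ] (1 : H))) * Jinv := by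
        simp only [mul_assoc]
    _ = phi Jinv * (qmap J ⊗ₜ[ℂ] qmap J) * Jinv := by rw [h3]

lemma K2 (htwist : (Algebra.TensorProduct.assoc ℂ ℂ ℂ H H H)
      ((TensorProduct.map (Coalgebra.comul (R := ℂ)) LinearMap.id) J * (J ⊗ₜ[ℂ] (1 : H)))
    = (TensorProduct.map LinearMap.id (Coalgebra.comul (R := ℂ))) J * ((1 : H) ⊗ₜ[ℂ] J))
    (hcounit₁ : (TensorProduct.lid ℂ H)
      ((TensorProduct.map (Coalgebra.counit (R := ℂ)) LinearMap.id) J) = 1)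
    (hJ₁ : J * Jinv = 1) (hJ₂ : Jinv * J = 1) {Q Qi : H} (hQ : Q = qmap J)
    (hQQi : Q * Qi = 1) (hQiQ : Qi * Q = 1) :
    Coalgebra.comul (R := ℂ) Qi = J * (Qi ⊗ₜ[ℂ] Qi) * phi J := by
  have hΔQ : Coalgebra.comul (R := ℂ) Q = phi Jinv * (Q ⊗ₜ[ℂ] Q) * Jinv := by
    rw [hQ]; exact K1 htwist hcounit₁ hJ₁
  have e1 : Coalgebra.comul (R := ℂ) Q * (J * (Qi ⊗ₜ[ℂ] Qi) * phi J) = 1 := by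
    rw [hΔQ]
    have s1 : Jinv * (J * ((Qi ⊗ₜ[ℂ] Qi) * phi J)) = (Qi ⊗ₜ[ℂ] Qi) * phi J := by
      rw [← mul_assoc, hJ₂, one_mul]
    have s2 : ((Q ⊗ₜ[ℂ] Q) : H ⊗[ℂ] H) * (Qi ⊗ₜ[ℂ] Qi) = 1 := by
      rw [Algebra.TensorProduct.tmul_mul_tmul, hQQi, Algebra.TensorProduct.one_def]
    have s3 : phi Jinv * phi J = 1 := by rw [← phi_antimul, hJ₁, phi_one]
    calc phi Jinv * (Q ⊗ₜ[ℂ] Q) * Jinv * (J * (Qi ⊗ₜ[ℂ] Qi) * phi J)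
        = phi Jinv * ((Q ⊗ₜ[ℂ] Q) * (Jinv * (J * ((Qi ⊗ₜ[ℂ] Qi) * phi J)))) := by
          simp only [mul_assoc]
      _ = phi Jinv * ((Q ⊗ₜ[ℂ] Q) * ((Qi ⊗ₜ[ℂ] Qi) * phi J)) := by rw [s1]
      _ = phi Jinv * (((Q ⊗ₜ[ℂ] Q) * (Qi ⊗ₜ[ℂ] Qi)) * phi J) := by rw [mul_assoc]
      _ = phi Jinv * phi J := by rw [s2, one_mul]
      _ = 1 := s3
  have e2 : Coalgebra.comul (R := ℂ) Qi * Coalgebra.comul (R := ℂ) Q = 1 := by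
    rw [← Bialgebra.comul_mul, hQiQ, Bialgebra.comul_one]
  exact left_inv_eq_right_inv e2 e1

lemma comul_v (htwist : (Algebra.TensorProduct.assoc ℂ ℂ ℂ H H H)
      ((TensorProduct.map (Coalgebra.comul (R := ℂ)) LinearMap.id) J * (J ⊗ₜ[ℂ] (1 : H)))
    = (TensorProduct.map LinearMap.id (Coalgebra.comul (R := ℂ))) J * ((1 : H) ⊗ₜ[ℂ] J))
    (hcounit₁ : (TensorProduct.lid ℂ H)
      ((TensorProduct.map (Coalgebra.counit (R := ℂ)) LinearMap.id) J) = 1)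
    (hJ₁ : J * Jinv = 1) (hJ₂ : Jinv * J = 1) {Q Qi : H} (hQ : Q = qmap J)
    (hQQi : Q * Qi = 1) (hQiQ : Qi * Q = 1) :
    Coalgebra.comul (R := ℂ) (S Qi * Q) =
      (TensorProduct.map (S ∘ₗ S) (S ∘ₗ S) J) * ((S Qi * Q) ⊗ₜ[ℂ] (S Qi * Q)) * Jinv := by
  have hΔQ : Coalgebra.comul (R := ℂ) Q = phi Jinv * (Q ⊗ₜ[ℂ] Q) * Jinv := by
    rw [hQ]; exact K1 htwist hcounit₁ hJ₁
  have hΔQi := K2 htwist hcounit₁ hJ₁ hJ₂ hQ hQQi hQiQ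
  have hphiQi : phi (Coalgebra.comul (R := ℂ) Qi) =
      TensorProduct.map (S ∘ₗ S) (S ∘ₗ S) J * (S Qi ⊗ₜ[ℂ] S Qi) * phi J := by
    rw [hΔQi, phi_antimul, phi_antimul, phi_phi, phi_tmul]
    simp only [mul_assoc]
  have sphi : phi J * phi Jinv = 1 := by rw [← phi_antimul, hJ₂, phi_one]
  have step1 : Coalgebra.comul (R := ℂ) (S Qi * Q) =
      phi (Coalgebra.comul (R := ℂ) Qi) * Coalgebra.comul (R := ℂ) Q := by
    rw [Bialgebra.comul_mul, comul_antipode]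
  rw [step1, hphiQi, hΔQ, ← Algebra.TensorProduct.tmul_mul_tmul (S Qi) Q (S Qi) Q]
  simp only [mul_assoc]
  congr 2
  rw [← mul_assoc, ← mul_assoc, sphi, one_mul]

end Twist

lemma Spow_one (k : ℕ) : ((HopfAlgebra.antipode (R := ℂ) (A := H)) ^ k) (1 : H) = 1 := by
  induction k with
  | zero => simp
  | succ m ih => rw [pow_succ, Module.End.mul_apply, antipode_one_H, ih]

lemma counit_Spow (k : ℕ) (x : H) :
    Coalgebra.counit (R := ℂ) (((HopfAlgebra.antipode (R := ℂ) (A := H)) ^ k) x) =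
      Coalgebra.counit (R := ℂ) x := by
  induction k with
  | zero => simp
  | succ m ih => rw [pow_succ', Module.End.mul_apply, counit_antipode, ih]

lemma Spow_even_mul (k : ℕ) (x y : H) :
    ((HopfAlgebra.antipode (R := ℂ) (A := H)) ^ (2 * k)) (x * y) =
      ((HopfAlgebra.antipode (R := ℂ) (A := H)) ^ (2 * k)) x *
        ((HopfAlgebra.antipode (R := ℂ) (A := H)) ^ (2 * k)) y := by
  induction k generalizing x y with
  | zero => simp
  | succ m ih =>
    have hexp : 2 * (m + 1) = 2 * m + 1 + 1 := by ring
    simp only [hexp, pow_succ, Module.End.mul_apply, antipode_mul, ih]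

lemma comul_Spow_even (k : ℕ) (x : H) :
    Coalgebra.comul (R := ℂ) (((HopfAlgebra.antipode (R := ℂ) (A := H)) ^ (2 * k)) x) =
      TensorProduct.map ((HopfAlgebra.antipode (R := ℂ) (A := H)) ^ (2 * k))
        ((HopfAlgebra.antipode (R := ℂ) (A := H)) ^ (2 * k))
        (Coalgebra.comul (R := ℂ) x) := by
  induction k generalizing x with
  | zero => simp
  | succ m ih =>
    have hexp : 2 * (m + 1) = 2 * m + 1 + 1 := by ring
    simp only [hexp, pow_succ, Module.End.mul_apply]
    rw [ih, comul_antipode, comul_antipode, phi_phi]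
    have : TensorProduct.map ((HopfAlgebra.antipode (R := ℂ) (A := H)) ^ (2 * m))
          ((HopfAlgebra.antipode (R := ℂ) (A := H)) ^ (2 * m))
            (TensorProduct.map (S ∘ₗ S) (S ∘ₗ S) (Coalgebra.comul (R := ℂ) x)) =
        TensorProduct.map (((HopfAlgebra.antipode (R := ℂ) (A := H)) ^ (2 * m)) ∘ₗ (S ∘ₗ S))
          (((HopfAlgebra.antipode (R := ℂ) (A := H)) ^ (2 * m)) ∘ₗ (S ∘ₗ S))
            (Coalgebra.comul (R := ℂ) x) := by
      rw [TensorProduct.map_comp ((HopfAlgebra.antipode (R := ℂ) (A := H)) ^ (2 * m))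
        ((HopfAlgebra.antipode (R := ℂ) (A := H)) ^ (2 * m)) (S ∘ₗ S) (S ∘ₗ S)]
      rfl
    rw [this]
    congr 1 <;>
      rw [Module.End.mul_eq_comp, Module.End.mul_eq_comp, LinearMap.comp_assoc]

lemma map_sigma_mul (σ : H →ₗ[ℂ] H) (hσ : ∀ x y : H, σ (x * y) = σ x * σ y)
    (X Y : H ⊗[ℂ] H) :
    TensorProduct.map σ σ (X * Y) = TensorProduct.map σ σ X * TensorProduct.map σ σ Y := by
  induction X using TensorProduct.induction_on with
  | zero => simp
  | add u v hu hv => rw [add_mul, map_add, hu, hv, map_add, add_mul]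
  | tmul x y =>
    induction Y using TensorProduct.induction_on with
    | zero => simp
    | add u v hu hv => rw [mul_add, map_add, hu, hv, map_add, mul_add]
    | tmul u v =>
      rw [Algebra.TensorProduct.tmul_mul_tmul, TensorProduct.map_tmul,
        TensorProduct.map_tmul, TensorProduct.map_tmul,
        Algebra.TensorProduct.tmul_mul_tmul, hσ, hσ]


lemma map_Spow_one (m : ℕ) :
    TensorProduct.map ((HopfAlgebra.antipode (R := ℂ) (A := H)) ^ (2 * m))
      ((HopfAlgebra.antipode (R := ℂ) (A := H)) ^ (2 * m)) (1 : H ⊗[ℂ] H) = 1 := by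
  rw [Algebra.TensorProduct.one_def, TensorProduct.map_tmul, Spow_one]

lemma map_Spow_comp (m : ℕ) (X : H ⊗[ℂ] H) :
    TensorProduct.map ((HopfAlgebra.antipode (R := ℂ) (A := H)) ^ (2 * m))
        ((HopfAlgebra.antipode (R := ℂ) (A := H)) ^ (2 * m))
        (TensorProduct.map (S ∘ₗ S) (S ∘ₗ S) X) =
      TensorProduct.map ((HopfAlgebra.antipode (R := ℂ) (A := H)) ^ (2 * (m + 1)))
        ((HopfAlgebra.antipode (R := ℂ) (A := H)) ^ (2 * (m + 1))) X := by
  have hcomp : ((HopfAlgebra.antipode (R := ℂ) (A := H)) ^ (2 * m)) ∘ₗ (S ∘ₗ S) =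
      (HopfAlgebra.antipode (R := ℂ) (A := H)) ^ (2 * (m + 1)) := by
    have hexp : 2 * (m + 1) = 2 * m + 1 + 1 := by ring
    rw [hexp, pow_succ, pow_succ, Module.End.mul_eq_comp, Module.End.mul_eq_comp,
      LinearMap.comp_assoc]
  calc TensorProduct.map ((HopfAlgebra.antipode (R := ℂ) (A := H)) ^ (2 * m))
        ((HopfAlgebra.antipode (R := ℂ) (A := H)) ^ (2 * m))
        (TensorProduct.map (S ∘ₗ S) (S ∘ₗ S) X)
      = (TensorProduct.map ((HopfAlgebra.antipode (R := ℂ) (A := H)) ^ (2 * m))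
          ((HopfAlgebra.antipode (R := ℂ) (A := H)) ^ (2 * m)) ∘ₗ
            TensorProduct.map (S ∘ₗ S) (S ∘ₗ S)) X := rfl
    _ = TensorProduct.map (((HopfAlgebra.antipode (R := ℂ) (A := H)) ^ (2 * m)) ∘ₗ (S ∘ₗ S))
          (((HopfAlgebra.antipode (R := ℂ) (A := H)) ^ (2 * m)) ∘ₗ (S ∘ₗ S)) X := by
        rw [← TensorProduct.map_comp]
    _ = TensorProduct.map ((HopfAlgebra.antipode (R := ℂ) (A := H)) ^ (2 * (m + 1)))
          ((HopfAlgebra.antipode (R := ℂ) (A := H)) ^ (2 * (m + 1))) X := by rw [hcomp]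

end Hopf
end TwistAux



open TwistAux

/-- Let `H` be a finite-dimensional Hopf algebra over `ℂ` with antipode `S`, and let
`J ∈ H ⊗ H` be a twist for `H`, i.e. `J` is invertible,
`(Δ⊗Id)(J)·(J⊗1) = (Id⊗Δ)(J)·(1⊗J)` and `(ε⊗Id)(J) = (Id⊗ε)(J) = 1`.
Let `Q = m∘(S⊗Id)(J)`, which is invertible with inverse `Q⁻¹ = m∘(Id⊗S)(J⁻¹)`.
Assume `S^{2n} = Id` for a positive integer `n` and set
`g := S^{2n-1}(Q⁻¹)·S^{2n-2}(Q)·⋯·S³(Q⁻¹)·S²(Q)·S(Q⁻¹)·Q`.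
Then `ε(g) = 1` and `Δ(g) = J·(g⊗g)·J⁻¹`, i.e. `g` is a grouplike element of the twisted
Hopf algebra `H^J`. -/
theorem twist_element_grouplike (H : Type) [Ring H] [HopfAlgebra ℂ H]
    [FiniteDimensional ℂ H]
    (J Jinv : H ⊗[ℂ] H) (hJ₁ : J * Jinv = 1) (hJ₂ : Jinv * J = 1)
    (htwist : (Algebra.TensorProduct.assoc ℂ ℂ ℂ H H H)
        ((TensorProduct.map (Coalgebra.comul (R := ℂ)) LinearMap.id) J * (J ⊗ₜ[ℂ] (1 : H)))
      = (TensorProduct.map LinearMap.id (Coalgebra.comul (R := ℂ))) J * ((1 : H) ⊗ₜ[ℂ] J))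
    (hcounit₁ : (TensorProduct.lid ℂ H)
      ((TensorProduct.map (Coalgebra.counit (R := ℂ)) LinearMap.id) J) = 1)
    (hcounit₂ : (TensorProduct.rid ℂ H)
      ((TensorProduct.map LinearMap.id (Coalgebra.counit (R := ℂ))) J) = 1)
    (Q Qi : H)
    (hQ : Q = LinearMap.mul' ℂ H
      ((TensorProduct.map (HopfAlgebra.antipode (R := ℂ)) LinearMap.id) J))
    (hQi : Qi = LinearMap.mul' ℂ H
      ((TensorProduct.map LinearMap.id (HopfAlgebra.antipode (R := ℂ))) Jinv))
    (hQQi : Q * Qi = 1) (hQiQ : Qi * Q = 1)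
    (n : ℕ) (hn : 0 < n)
    (hS2n : (HopfAlgebra.antipode (R := ℂ) (A := H)) ^ (2 * n) = LinearMap.id)
    (g : H)
    (hg : g = ((List.range n).reverse.map (fun k =>
      ((HopfAlgebra.antipode (R := ℂ) (A := H)) ^ (2 * k + 1)) Qi *
        ((HopfAlgebra.antipode (R := ℂ) (A := H)) ^ (2 * k)) Q)).prod) :
    Coalgebra.counit (R := ℂ) g = 1 ∧
      Coalgebra.comul (R := ℂ) g = J * (g ⊗ₜ[ℂ] g) * Jinv := by
  set f : ℕ → H := fun k =>
      ((HopfAlgebra.antipode (R := ℂ) (A := H)) ^ (2 * k + 1)) Qi *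
        ((HopfAlgebra.antipode (R := ℂ) (A := H)) ^ (2 * k)) Q with hf
  have hQ' : Q = qmap J := hQ
  constructor
  · -- counit
    rw [hg]
    have h1 : Coalgebra.counit (R := ℂ) (((List.range n).reverse.map f).prod) =
        (Bialgebra.counitAlgHom ℂ H) (((List.range n).reverse.map f).prod) := rfl
    rw [h1, map_list_prod]
    apply List.prod_eq_one
    intro x hx
    rw [List.map_map, List.mem_map] at hx
    obtain ⟨k, _, rfl⟩ := hx
    show Coalgebra.counit (R := ℂ) (f k) = 1
    rw [hf]
    simp only []
    rw [Bialgebra.counit_mul, counit_Spow, counit_Spow, ← Bialgebra.counit_mul, hQiQ,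
      Bialgebra.counit_one]
  · -- comul
    have key : ∀ m : ℕ, Coalgebra.comul (R := ℂ) (((List.range m).reverse.map f).prod) =
        (TensorProduct.map ((HopfAlgebra.antipode (R := ℂ) (A := H)) ^ (2 * m))
            ((HopfAlgebra.antipode (R := ℂ) (A := H)) ^ (2 * m)) J) *
          ((((List.range m).reverse.map f).prod) ⊗ₜ[ℂ]
            (((List.range m).reverse.map f).prod)) * Jinv := by
      intro m
      induction m with
      | zero =>
        simp only [List.range_zero, List.reverse_nil, List.map_nil, List.prod_nil]
        rw [Bialgebra.comul_one, Nat.mul_zero, pow_zero, Module.End.one_eq_id,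
          TensorProduct.map_id, LinearMap.id_coe, id_eq, ← Algebra.TensorProduct.one_def,
          mul_one, hJ₁]
      | succ m ih =>
        have hstep : ((List.range (m + 1)).reverse.map f).prod =
            f m * ((List.range m).reverse.map f).prod := by
          rw [List.range_succ, List.reverse_append]
          simp
        set P : H := ((List.range m).reverse.map f).prod with hP
        have hfm : f m = ((HopfAlgebra.antipode (R := ℂ) (A := H)) ^ (2 * m))
            ((HopfAlgebra.antipode (R := ℂ) (A := H)) Qi * Q) := by
          rw [hf]
          simp only []
          rw [pow_succ, Module.End.mul_apply, Spow_even_mul]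
        have hv := comul_v (J := J) (Jinv := Jinv) htwist hcounit₁ hJ₁ hJ₂ hQ' hQQi hQiQ
        rw [hstep, Bialgebra.comul_mul, ih, hfm, comul_Spow_even, hv]
        rw [map_sigma_mul _ (Spow_even_mul m), map_sigma_mul _ (Spow_even_mul m)]
        rw [map_Spow_comp, TensorProduct.map_tmul]
        rw [← hfm]
        have mid : ∀ W : H ⊗[ℂ] H,
            TensorProduct.map ((HopfAlgebra.antipode (R := ℂ) (A := H)) ^ (2 * m))
                ((HopfAlgebra.antipode (R := ℂ) (A := H)) ^ (2 * m)) Jinv *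
              (TensorProduct.map ((HopfAlgebra.antipode (R := ℂ) (A := H)) ^ (2 * m))
                ((HopfAlgebra.antipode (R := ℂ) (A := H)) ^ (2 * m)) J * W) = W := by
          intro W
          rw [← mul_assoc, ← map_sigma_mul _ (Spow_even_mul m), hJ₂, map_Spow_one, one_mul]
        have htm : ((f m ⊗ₜ[ℂ] f m) : H ⊗[ℂ] H) * (P ⊗ₜ[ℂ] P) =
            (f m * P) ⊗ₜ[ℂ] (f m * P) := by
          rw [Algebra.TensorProduct.tmul_mul_tmul]
        calc TensorProduct.map ((HopfAlgebra.antipode (R := ℂ) (A := H)) ^ (2 * (m + 1)))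
              ((HopfAlgebra.antipode (R := ℂ) (A := H)) ^ (2 * (m + 1))) J *
              (f m ⊗ₜ[ℂ] f m) *
              TensorProduct.map ((HopfAlgebra.antipode (R := ℂ) (A := H)) ^ (2 * m))
                ((HopfAlgebra.antipode (R := ℂ) (A := H)) ^ (2 * m)) Jinv *
              (TensorProduct.map ((HopfAlgebra.antipode (R := ℂ) (A := H)) ^ (2 * m))
                ((HopfAlgebra.antipode (R := ℂ) (A := H)) ^ (2 * m)) J * (P ⊗ₜ[ℂ] P) * Jinv)
            = TensorProduct.map ((HopfAlgebra.antipode (R := ℂ) (A := H)) ^ (2 * (m + 1)))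
              ((HopfAlgebra.antipode (R := ℂ) (A := H)) ^ (2 * (m + 1))) J *
              ((f m ⊗ₜ[ℂ] f m) *
              (TensorProduct.map ((HopfAlgebra.antipode (R := ℂ) (A := H)) ^ (2 * m))
                ((HopfAlgebra.antipode (R := ℂ) (A := H)) ^ (2 * m)) Jinv *
              (TensorProduct.map ((HopfAlgebra.antipode (R := ℂ) (A := H)) ^ (2 * m))
                ((HopfAlgebra.antipode (R := ℂ) (A := H)) ^ (2 * m)) J * ((P ⊗ₜ[ℂ] P) * Jinv)))) := by
              simp only [mul_assoc]
          _ = TensorProduct.map ((HopfAlgebra.antipode (R := ℂ) (A := H)) ^ (2 * (m + 1)))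
              ((HopfAlgebra.antipode (R := ℂ) (A := H)) ^ (2 * (m + 1))) J *
              ((f m ⊗ₜ[ℂ] f m) * ((P ⊗ₜ[ℂ] P) * Jinv)) := by rw [mid]
          _ = TensorProduct.map ((HopfAlgebra.antipode (R := ℂ) (A := H)) ^ (2 * (m + 1)))
              ((HopfAlgebra.antipode (R := ℂ) (A := H)) ^ (2 * (m + 1))) J *
              ((f m * P) ⊗ₜ[ℂ] (f m * P)) * Jinv := by
              rw [← mul_assoc (f m ⊗ₜ[ℂ] f m), htm]
              simp only [mul_assoc]
    rw [hg]
    rw [key n, hS2n, TensorProduct.map_id, LinearMap.id_coe, id_eq]
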